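/- Let n ≥ 3, let W be a 4-tensor on ℝⁿ with curvature symmetries, satisfying the first Bianchi identity, and totally trace-free, and let B be a real symmetric trace-free n×n matrix. Then |−Σ_{i,j,k,l} W_{ijkl} B_{ik} B_{jl} + (n/(n−2)) tr(B³)| ≤ √((n−2)/(2(n−1))) · (‖W‖² + (2n/(n−2))‖B‖²)^{1/2} · ‖B‖². -/

import Mathlib

open Finset

namespace Stmt5Aux
variable {n : ℕ}

noncomputable def dl (i j : Fin n) : ℝ := if i = j then 1 else 0
noncomputable def EE (B : Fin n → Fin n → ℝ) (i j : Fin n) : ℝ := ∑ k, B i k * B k j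
noncomputable def b2 (B : Fin n → Fin n → ℝ) : ℝ := ∑ i, ∑ j, (B i j)^2
noncomputable def rr (B : Fin n → Fin n → ℝ) (i j : Fin n) : ℝ :=
  EE B i j - b2 B / n * dl i j
noncomputable def DD (B : Fin n → Fin n → ℝ) (i j k l : Fin n) : ℝ :=
  B i k * B j l - B i l * B j k
  + (1/((n:ℝ)-2)) * (dl i k * rr B j l + dl j l * rr B i k - dl i l * rr B j k - dl j k * rr B i l)
  + (b2 B/((n:ℝ)*((n:ℝ)-1))) * (dl i k * dl j l - dl i l * dl j k)

lemma DD_def (B : Fin n → Fin n → ℝ) (i j k l : Fin n) :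
    DD B i j k l = B i k * B j l - B i l * B j k
      + (1/((n:ℝ)-2)) * (dl i k * rr B j l + dl j l * rr B i k - dl i l * rr B j k - dl j k * rr B i l)
      + (b2 B/((n:ℝ)*((n:ℝ)-1))) * (dl i k * dl j l - dl i l * dl j k) := rfl

@[simp] lemma sum_dl_mul (k : Fin n) (f : Fin n → ℝ) : (∑ i, dl i k * f i) = f k := by
  simp [dl, ite_mul]
@[simp] lemma sum_dl_mul' (k : Fin n) (f : Fin n → ℝ) : (∑ i, dl k i * f i) = f k := by
  simp [dl, ite_mul, eq_comm]
@[simp] lemma sum_mul_dl (k : Fin n) (f : Fin n → ℝ) : (∑ i, f i * dl i k) = f k := by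
  simp [dl, mul_ite]
@[simp] lemma sum_mul_dl' (k : Fin n) (f : Fin n → ℝ) : (∑ i, f i * dl k i) = f k := by
  simp [dl, mul_ite, eq_comm]
@[simp] lemma sum_dl_diag : (∑ i : Fin n, dl i i) = n := by simp [dl]
lemma dl_symm (i j : Fin n) : dl i j = dl j i := by simp [dl, eq_comm]

/-! ### sum reshaping blocks -/

lemma blk1 (h g : Fin n → ℝ) :
    (∑ i, ∑ j, h i * g j) = (∑ i, h i) * (∑ j, g j) := (Finset.sum_mul_sum _ _ _ _).symm

lemma blk2 (f g : Fin n → Fin n → ℝ) :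
    (∑ i, ∑ j, ∑ k, ∑ l, f i k * g j l) = (∑ i, ∑ k, f i k) * (∑ j, ∑ l, g j l) := by
  have h1 : ∀ i j, (∑ k, ∑ l, f i k * g j l) = (∑ k, f i k) * (∑ l, g j l) :=
    fun i j => blk1 _ _
  simp_rw [h1]; exact blk1 _ _

lemma blk2' (f g : Fin n → Fin n → ℝ) :
    (∑ i, ∑ j, ∑ k, ∑ l, f i l * g j k) = (∑ i, ∑ l, f i l) * (∑ j, ∑ k, g j k) := by
  have h1 : ∀ i j, (∑ k, ∑ l, f i l * g j k) = (∑ l, f i l) * (∑ k, g j k) := by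
    intro i j; rw [Finset.sum_comm]; exact blk1 _ _
  simp_rw [h1]; exact blk1 _ _

lemma blk3 (f : Fin n → Fin n → Fin n → ℝ) (G : Fin n → Fin n → ℝ) :
    (∑ i, ∑ k, ∑ l, f i k l * G k l) = ∑ k, ∑ l, (∑ i, f i k l) * G k l := by
  rw [Finset.sum_comm]
  refine Finset.sum_congr rfl fun k _ => ?_
  rw [Finset.sum_comm]
  refine Finset.sum_congr rfl fun l _ => ?_
  rw [Finset.sum_mul]

lemma blk4 (f : Fin n → Fin n → Fin n → ℝ) (G : Fin n → Fin n → ℝ) :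
    (∑ i, ∑ j, ∑ l, f i j l * G i l) = ∑ i, ∑ l, (∑ j, f i j l) * G i l := by
  refine Finset.sum_congr rfl fun i _ => ?_
  rw [Finset.sum_comm]
  refine Finset.sum_congr rfl fun l _ => ?_
  rw [Finset.sum_mul]

lemma blk5 (f g : Fin n → Fin n → Fin n → ℝ) :
    (∑ i, ∑ j, ∑ k, ∑ l, f i k l * g j k l) = ∑ k, ∑ l, (∑ i, f i k l) * (∑ j, g j k l) := by
  have h1 : ∀ i, (∑ j, ∑ k, ∑ l, f i k l * g j k l) = ∑ k, ∑ l, f i k l * (∑ j, g j k l) := by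
    intro i
    rw [Finset.sum_comm]
    refine Finset.sum_congr rfl fun k _ => ?_
    rw [Finset.sum_comm]
    refine Finset.sum_congr rfl fun l _ => ?_
    rw [← Finset.mul_sum]
  simp_rw [h1]; exact blk3 _ _

/-! ### expansion helpers -/

lemma exp_mul (x v t1 t2 t3 t4 s1 s2 a c w : ℝ)
    (h : x = v + a*(t1+t2-t3-t4) + c*(s1-s2)) :
    w*x = w*v + a*(w*t1 + w*t2 - w*t3 - w*t4) + c*(w*s1 - w*s2) := by
  rw [h]; ring

lemma exp_sq (x v t1 t2 t3 t4 s1 s2 a c : ℝ)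
    (h : x = v + a*(t1+t2-t3-t4) + c*(s1-s2)) :
    x^2 = x*v + a*(x*t1 + x*t2 - x*t3 - x*t4) + c*(x*s1 - x*s2) := by
  rw [h]; ring

lemma exp_mul' (x v t1 t2 t3 t4 s1 s2 a c : ℝ)
    (h : x = v + a*(t1+t2-t3-t4) + c*(s1-s2)) :
    x*v = v^2 + a*(t1*v + t2*v - t3*v - t4*v) + c*(s1*v - s2*v) := by
  rw [h]; ring

/-! ### basic facts about EE, rr -/

section BB
variable (B : Fin n → Fin n → ℝ)

lemma EE_symm (hBs : ∀ i j, B j i = B i j) : ∀ i j, EE B i j = EE B j i := by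
  intro i j
  unfold EE
  refine Finset.sum_congr rfl fun k _ => ?_
  rw [hBs i k, hBs k j]; ring

lemma trEE (hBs : ∀ i j, B j i = B i j) : (∑ i, EE B i i) = b2 B := by
  unfold EE b2
  refine Finset.sum_congr rfl fun i _ => Finset.sum_congr rfl fun k _ => ?_
  rw [hBs k i]; ring

lemma trrr (hBs : ∀ i j, B j i = B i j) : (∑ i, rr B i i) = 0 := by
  unfold rr
  rcases Nat.eq_zero_or_pos n with h | h
  · subst h; simp
  rw [Finset.sum_sub_distrib, trEE B hBs, ← Finset.mul_sum, sum_dl_diag]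
  field_simp
  ring

lemma rr_symm (hBs : ∀ i j, B j i = B i j) : ∀ i j, rr B i j = rr B j i := by
  intro i j; unfold rr; rw [EE_symm B hBs, dl_symm]

lemma rrEE (hBs : ∀ i j, B j i = B i j) :
    (∑ i, ∑ j, rr B i j * EE B i j) = ∑ i, ∑ j, (rr B i j)^2 := by
  have h : ∀ i j, rr B i j * EE B i j = (rr B i j)^2 + (b2 B / n) * (rr B i j * dl i j) := by
    intro i j
    have hE : EE B i j = rr B i j + b2 B / n * dl i j := by unfold rr; ring
    rw [hE]; ring
  simp_rw [h, Finset.sum_add_distrib, ← Finset.mul_sum, sum_mul_dl']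
  rw [trrr B hBs]
  ring

lemma EErr (hBs : ∀ i j, B j i = B i j) :
    (∑ i, ∑ j, EE B i j * rr B i j) = ∑ i, ∑ j, (rr B i j)^2 := by
  rw [← rrEE B hBs]
  exact Finset.sum_congr rfl fun i _ => Finset.sum_congr rfl fun j _ => mul_comm _ _

lemma EEdl : (∑ i, ∑ j, EE B i j * dl i j) = ∑ i, EE B i i := by
  refine Finset.sum_congr rfl fun i _ => ?_
  rw [sum_mul_dl']

lemma q_eq (hn : 0 < n) (hBs : ∀ i j, B j i = B i j) :
    (∑ i, ∑ j, (EE B i j)^2) = (∑ i, ∑ j, (rr B i j)^2) + b2 B ^2 / n := by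
  have h : ∀ i j, (EE B i j)^2 = (rr B i j)^2 + 2 * (b2 B / n) * (rr B i j * dl i j) + (b2 B/n)^2 * (dl i j)^2 := by
    intro i j
    have hE : EE B i j = rr B i j + b2 B / n * dl i j := by unfold rr; ring
    rw [hE]; ring
  simp_rw [h, Finset.sum_add_distrib, ← Finset.mul_sum, sum_mul_dl']
  have h3 : (∑ i : Fin n, ∑ j : Fin n, (dl i j)^2) = n := by
    have h4 : ∀ i : Fin n, (∑ j : Fin n, (dl i j)^2) = 1 := by
      intro i; simp [dl, sq, ite_mul]
    simp_rw [h4]; simp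
  rw [h3, trrr B hBs]
  have hn' : (n:ℝ) ≠ 0 := by positivity
  field_simp
  ring
end BB

/-! ### contraction-zero lemmas for trace-free curvature-type tensors -/

section CZ
variable (X : Fin n → Fin n → Fin n → Fin n → ℝ) (g : Fin n → Fin n → ℝ)

lemma czA (hric : ∀ j l, (∑ i, X i j i l) = 0) :
    (∑ i, ∑ j, ∑ k, ∑ l, X i j k l * (dl i k * g j l)) = 0 := by
  have h1 : (∑ i, ∑ j, ∑ k, ∑ l, X i j k l * (dl i k * g j l))
      = ∑ i, ∑ j, ∑ l, X i j i l * g j l := by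
    simp [dl, mul_ite, ite_mul, Finset.sum_ite_irrel, Finset.sum_ite_eq, Finset.sum_ite_eq']
  rw [h1, blk3 (fun i j l => X i j i l) g]
  simp [hric]

lemma czB (hsym : ∀ i j k l, X i j k l = X j i l k) (hric : ∀ j l, (∑ i, X i j i l) = 0) :
    (∑ i, ∑ j, ∑ k, ∑ l, X i j k l * (dl j l * g i k)) = 0 := by
  have h1 : (∑ i, ∑ j, ∑ k, ∑ l, X i j k l * (dl j l * g i k))
      = ∑ i, ∑ j, ∑ k, X i j k j * g i k := by
    simp [dl, mul_ite, ite_mul, Finset.sum_ite_irrel, Finset.sum_ite_eq, Finset.sum_ite_eq']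
  rw [h1]
  have h2 : (∑ i, ∑ j, ∑ k, X i j k j * g i k) = ∑ i, ∑ j, ∑ k, X j i j k * g i k := by
    refine Finset.sum_congr rfl fun i _ => Finset.sum_congr rfl fun j _ =>
      Finset.sum_congr rfl fun k _ => ?_
    rw [hsym i j k j]
  rw [h2, blk4 (fun i j k => X j i j k) g]
  simp [hric]

lemma czC (hanti2 : ∀ i j k l, X i j k l = -X i j l k) (hric : ∀ j l, (∑ i, X i j i l) = 0) :
    (∑ i, ∑ j, ∑ k, ∑ l, X i j k l * (dl i l * g j k)) = 0 := by
  have h1 : (∑ i, ∑ j, ∑ k, ∑ l, X i j k l * (dl i l * g j k))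
      = ∑ i, ∑ j, ∑ k, X i j k i * g j k := by
    simp [dl, mul_ite, ite_mul, Finset.sum_ite_irrel, Finset.sum_ite_eq, Finset.sum_ite_eq']
  rw [h1]
  have h2 : (∑ i, ∑ j, ∑ k, X i j k i * g j k) = ∑ i, ∑ j, ∑ k, (-X i j i k) * g j k := by
    refine Finset.sum_congr rfl fun i _ => Finset.sum_congr rfl fun j _ =>
      Finset.sum_congr rfl fun k _ => ?_
    rw [hanti2 i j k i]
  rw [h2, blk3 (fun i j k => -X i j i k) g]
  simp [hric]

lemma czD (hanti1 : ∀ i j k l, X i j k l = -X j i k l) (hric : ∀ j l, (∑ i, X i j i l) = 0) :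
    (∑ i, ∑ j, ∑ k, ∑ l, X i j k l * (dl j k * g i l)) = 0 := by
  have h1 : (∑ i, ∑ j, ∑ k, ∑ l, X i j k l * (dl j k * g i l))
      = ∑ i, ∑ j, ∑ l, X i j j l * g i l := by
    simp [dl, mul_ite, ite_mul, Finset.sum_ite_irrel, Finset.sum_ite_eq, Finset.sum_ite_eq']
  rw [h1]
  have h2 : (∑ i, ∑ j, ∑ l, X i j j l * g i l) = ∑ i, ∑ j, ∑ l, (-X j i j l) * g i l := by
    refine Finset.sum_congr rfl fun i _ => Finset.sum_congr rfl fun j _ =>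
      Finset.sum_congr rfl fun l _ => ?_
    rw [hanti1 i j j l]
  rw [h2, blk4 (fun i j l => -X j i j l) g]
  simp [hric]
end CZ

/-! ### pairings of the correction tensors with V -/

section V
variable (B : Fin n → Fin n → ℝ) (g : Fin n → Fin n → ℝ)

lemma VKrA (hBs : ∀ i j, B j i = B i j) (htr : (∑ i, B i i) = 0) :
    (∑ i, ∑ j, ∑ k, ∑ l, (dl i k * g j l) * (B i k * B j l - B i l * B j k))
      = -∑ j, ∑ l, EE B j l * g j l := by
  have h1 : (∑ i, ∑ j, ∑ k, ∑ l, (dl i k * g j l) * (B i k * B j l - B i l * B j k))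
      = ∑ i, ∑ j, ∑ l, (B i i * B j l - B i l * B j i) * g j l := by
    simp [dl, mul_ite, ite_mul, Finset.sum_ite_irrel, Finset.sum_ite_eq, Finset.sum_ite_eq',
      mul_comm]
  rw [h1]
  have h2 : ∀ i j l, (B i i * B j l - B i l * B j i) * g j l
      = B i i * (B j l * g j l) - (B i l * B j i) * g j l := by intros; ring
  simp_rw [h2, Finset.sum_sub_distrib, ← Finset.mul_sum, ← Finset.sum_mul]
  rw [htr, blk3 (fun i j l => B i l * B j i) g]
  have h3 : ∀ j l, (∑ i, B i l * B j i) = EE B j l := by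
    intro j l
    unfold EE
    refine Finset.sum_congr rfl fun i _ => ?_
    ring
  simp_rw [h3]
  ring

lemma VKrB (htr : (∑ i, B i i) = 0) :
    (∑ i, ∑ j, ∑ k, ∑ l, (dl j l * g i k) * (B i k * B j l - B i l * B j k))
      = -∑ i, ∑ k, EE B i k * g i k := by
  have h1 : (∑ i, ∑ j, ∑ k, ∑ l, (dl j l * g i k) * (B i k * B j l - B i l * B j k))
      = ∑ i, ∑ j, ∑ k, (B i k * B j j - B i j * B j k) * g i k := by
    simp [dl, mul_ite, ite_mul, Finset.sum_ite_irrel, Finset.sum_ite_eq, Finset.sum_ite_eq',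
      mul_comm]
  rw [h1]
  have h2 : ∀ i j k, (B i k * B j j - B i j * B j k) * g i k
      = B j j * (B i k * g i k) - (B i j * B j k) * g i k := by intros; ring
  simp_rw [h2, Finset.sum_sub_distrib]
  have h3 : (∑ i, ∑ j, ∑ k, B j j * (B i k * g i k))
      = ∑ j, ∑ i, ∑ k, B j j * (B i k * g i k) := Finset.sum_comm
  rw [h3]
  simp_rw [← Finset.mul_sum, ← Finset.sum_mul]
  rw [htr, blk4 (fun i j k => B i j * B j k) g]
  have h4 : ∀ i k, (∑ j, B i j * B j k) = EE B i k := fun i k => rfl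
  simp_rw [h4]
  ring

lemma VKrC (htr : (∑ i, B i i) = 0) :
    (∑ i, ∑ j, ∑ k, ∑ l, (dl i l * g j k) * (B i k * B j l - B i l * B j k))
      = ∑ j, ∑ k, EE B j k * g j k := by
  have h1 : (∑ i, ∑ j, ∑ k, ∑ l, (dl i l * g j k) * (B i k * B j l - B i l * B j k))
      = ∑ i, ∑ j, ∑ k, (B i k * B j i - B i i * B j k) * g j k := by
    simp [dl, mul_ite, ite_mul, Finset.sum_ite_irrel, Finset.sum_ite_eq, Finset.sum_ite_eq',
      mul_comm]
  rw [h1]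
  have h2 : ∀ i j k, (B i k * B j i - B i i * B j k) * g j k
      = (B i k * B j i) * g j k - B i i * (B j k * g j k) := by intros; ring
  simp_rw [h2, Finset.sum_sub_distrib, ← Finset.mul_sum, ← Finset.sum_mul]
  rw [htr, blk3 (fun i j k => B i k * B j i) g]
  have h3 : ∀ j k, (∑ i, B i k * B j i) = EE B j k := by
    intro j k
    unfold EE
    refine Finset.sum_congr rfl fun i _ => ?_
    ring
  simp_rw [h3]
  ring

lemma VKrD (htr : (∑ i, B i i) = 0) :
    (∑ i, ∑ j, ∑ k, ∑ l, (dl j k * g i l) * (B i k * B j l - B i l * B j k))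
      = ∑ i, ∑ l, EE B i l * g i l := by
  have h1 : (∑ i, ∑ j, ∑ k, ∑ l, (dl j k * g i l) * (B i k * B j l - B i l * B j k))
      = ∑ i, ∑ j, ∑ l, (B i j * B j l - B i l * B j j) * g i l := by
    simp [dl, mul_ite, ite_mul, Finset.sum_ite_irrel, Finset.sum_ite_eq, Finset.sum_ite_eq',
      mul_comm]
  rw [h1]
  have h2 : ∀ i j l, (B i j * B j l - B i l * B j j) * g i l
      = (B i j * B j l) * g i l - B j j * (B i l * g i l) := by intros; ring
  simp_rw [h2, Finset.sum_sub_distrib]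
  have h3 : (∑ i, ∑ j, ∑ l, B j j * (B i l * g i l))
      = ∑ j, ∑ i, ∑ l, B j j * (B i l * g i l) := Finset.sum_comm
  rw [h3]
  simp_rw [← Finset.mul_sum, ← Finset.sum_mul]
  rw [htr, blk4 (fun i j l => B i j * B j l) g]
  have h4 : ∀ i l, (∑ j, B i j * B j l) = EE B i l := fun i l => rfl
  simp_rw [h4]
  ring

lemma hVV (hBs : ∀ i j, B j i = B i j) :
    (∑ i, ∑ j, ∑ k, ∑ l, (B i k * B j l - B i l * B j k)^2)
      = 2 * (b2 B)^2 - 2 * ∑ k, ∑ l, (EE B k l)^2 := by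
  have h2 : ∀ i j k l, (B i k * B j l - B i l * B j k)^2
      = (B i k)^2 * (B j l)^2 + (B i l)^2 * (B j k)^2
        - (2 * (B i k * B i l)) * (B j k * B j l) := by intros; ring
  simp_rw [h2, Finset.sum_sub_distrib, Finset.sum_add_distrib]
  rw [blk2 (fun i k => (B i k)^2) (fun j l => (B j l)^2),
    blk2' (fun i l => (B i l)^2) (fun j k => (B j k)^2),
    blk5 (fun i k l => 2 * (B i k * B i l)) (fun j k l => B j k * B j l)]
  have h3 : ∀ k l, (∑ i, 2 * (B i k * B i l)) = 2 * EE B k l := by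
    intro k l
    rw [← Finset.mul_sum]
    unfold EE
    congr 1
    refine Finset.sum_congr rfl fun i _ => ?_
    rw [hBs i k]
  have h3' : ∀ k l, (∑ j, B j k * B j l) = EE B k l := by
    intro k l
    unfold EE
    refine Finset.sum_congr rfl fun i _ => ?_
    rw [hBs i k]
  simp_rw [h3, h3']
  have h4 : (∑ i, ∑ k, (B i k)^2) = b2 B := rfl
  have h5 : ∀ k l, 2 * EE B k l * EE B k l = 2 * (EE B k l)^2 := fun k l => by ring
  simp_rw [h5, h4, ← Finset.mul_sum]
  ring
end V

/-! ### DD facts -/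

section D
variable (B : Fin n → Fin n → ℝ)

lemma DD_symm : ∀ i j k l, DD B i j k l = DD B j i l k := by
  intro i j k l; unfold DD; rw [dl_symm i l, dl_symm j k, dl_symm i k, dl_symm j l]; ring

lemma DD_anti2 : ∀ i j k l, DD B i j k l = -DD B i j l k := by
  intro i j k l; unfold DD; ring

lemma DD_anti1 : ∀ i j k l, DD B i j k l = -DD B j i k l := by
  intro i j k l; unfold DD; ring

lemma ricci0 (hn : 3 ≤ n) (hBs : ∀ i j, B j i = B i j)
    (htr : (∑ i, B i i) = 0) : ∀ j l, ∑ i, DD B i j i l = 0 := by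
  intro j l
  unfold DD
  simp only [Finset.sum_add_distrib, Finset.sum_sub_distrib, ← Finset.mul_sum, ← Finset.sum_mul]
  rw [htr, trrr B hBs]
  simp only [sum_dl_mul, sum_dl_mul', sum_mul_dl, sum_mul_dl', sum_dl_diag]
  have h1 : (∑ i, B i l * B j i) = EE B j l := by
    unfold EE; refine Finset.sum_congr rfl fun i _ => ?_; ring
  rw [h1]
  have hn2 : ((n:ℝ)) ≥ 3 := by exact_mod_cast hn
  have h2 : ((n:ℝ)-2) ≠ 0 := by nlinarith
  have h3 : ((n:ℝ)) ≠ 0 := by nlinarith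
  have h4 : ((n:ℝ)-1) ≠ 0 := by nlinarith
  unfold rr
  field_simp
  ring

lemma sumDDsq (hn : 3 ≤ n) (hBs : ∀ i j, B j i = B i j) (htr : (∑ i, B i i) = 0) :
    (∑ i, ∑ j, ∑ k, ∑ l, (DD B i j k l)^2)
      = ∑ i, ∑ j, ∑ k, ∑ l, DD B i j k l * (B i k * B j l - B i l * B j k) := by
  have hric := ricci0 B hn hBs htr
  have hpt : ∀ i j k l, (DD B i j k l)^2
      = DD B i j k l * (B i k * B j l - B i l * B j k)
        + (1/((n:ℝ)-2)) * (DD B i j k l * (dl i k * rr B j l) + DD B i j k l * (dl j l * rr B i k)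
            - DD B i j k l * (dl i l * rr B j k) - DD B i j k l * (dl j k * rr B i l))
        + (b2 B/((n:ℝ)*((n:ℝ)-1))) * (DD B i j k l * (dl i k * dl j l) - DD B i j k l * (dl i l * dl j k)) :=
    fun i j k l => exp_sq _ _ _ _ _ _ _ _ _ _ (DD_def B i j k l)
  simp only [hpt, Finset.sum_add_distrib, Finset.sum_sub_distrib, ← Finset.mul_sum]
  rw [czA (DD B) (rr B) hric, czB (DD B) (rr B) (DD_symm B) hric,
    czC (DD B) (rr B) (DD_anti2 B) hric, czD (DD B) (rr B) (DD_anti1 B) hric,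
    czA (DD B) dl hric, czC (DD B) dl (DD_anti2 B) hric]
  ring

lemma sumDDV (hn : 3 ≤ n) (hBs : ∀ i j, B j i = B i j) (htr : (∑ i, B i i) = 0) :
    (∑ i, ∑ j, ∑ k, ∑ l, DD B i j k l * (B i k * B j l - B i l * B j k))
      = 2 * (b2 B)^2 - 2 * (∑ k, ∑ l, (EE B k l)^2)
        - (1/((n:ℝ)-2)) * (4 * ∑ i, ∑ j, (rr B i j)^2)
        - (b2 B/((n:ℝ)*((n:ℝ)-1))) * (2 * b2 B) := by
  have hpt : ∀ i j k l, DD B i j k l * (B i k * B j l - B i l * B j k)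
      = (B i k * B j l - B i l * B j k)^2
        + (1/((n:ℝ)-2)) * ((dl i k * rr B j l) * (B i k * B j l - B i l * B j k)
            + (dl j l * rr B i k) * (B i k * B j l - B i l * B j k)
            - (dl i l * rr B j k) * (B i k * B j l - B i l * B j k)
            - (dl j k * rr B i l) * (B i k * B j l - B i l * B j k))
        + (b2 B/((n:ℝ)*((n:ℝ)-1))) * ((dl i k * dl j l) * (B i k * B j l - B i l * B j k)
            - (dl i l * dl j k) * (B i k * B j l - B i l * B j k)) :=
    fun i j k l => exp_mul' _ _ _ _ _ _ _ _ _ _ (DD_def B i j k l)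
  simp only [hpt, Finset.sum_add_distrib, Finset.sum_sub_distrib, ← Finset.mul_sum]
  rw [hVV B hBs, VKrA B (rr B) hBs htr, VKrB B (rr B) htr, VKrC B (rr B) htr,
    VKrD B (rr B) htr, VKrA B dl hBs htr, VKrC B dl htr]
  rw [EErr B hBs, EEdl, trEE B hBs]
  ring

lemma hNorm (hn : 3 ≤ n) (hBs : ∀ i j, B j i = B i j) (htr : (∑ i, B i i) = 0) :
    (∑ i, ∑ j, ∑ k, ∑ l, (DD B i j k l)^2)
        + (2*(n:ℝ)/((n:ℝ)-2)) * (∑ i, ∑ j, (rr B i j)^2)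
      = (2*((n:ℝ)-2)/((n:ℝ)-1)) * (b2 B)^2 := by
  have hn0 : 0 < n := by omega
  rw [sumDDsq B hn hBs htr, sumDDV B hn hBs htr, q_eq B hn0 hBs]
  have hn2 : ((n:ℝ)) ≥ 3 := by exact_mod_cast hn
  have h2 : ((n:ℝ)-2) ≠ 0 := by nlinarith
  have h3 : ((n:ℝ)) ≠ 0 := by nlinarith
  have h4 : ((n:ℝ)-1) ≠ 0 := by nlinarith
  field_simp
  ring
end D


lemma sumWV (W : Fin n → Fin n → Fin n → Fin n → ℝ) (B : Fin n → Fin n → ℝ)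
    (hanti2 : ∀ i j k l, W i j k l = -W i j l k) :
    (∑ i, ∑ j, ∑ k, ∑ l, W i j k l * (B i k * B j l - B i l * B j k))
      = 2 * ∑ i, ∑ j, ∑ k, ∑ l, W i j k l * B i k * B j l := by
  have hpt : ∀ i j k l, W i j k l * (B i k * B j l - B i l * B j k)
      = W i j k l * B i k * B j l - W i j k l * (B i l * B j k) := by intros; ring
  simp_rw [hpt, Finset.sum_sub_distrib]
  have h2 : ∀ i j, (∑ k, ∑ l, W i j k l * (B i l * B j k))
      = -∑ k, ∑ l, W i j k l * B i k * B j l := by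
    intro i j
    rw [Finset.sum_comm, ← Finset.sum_neg_distrib]
    refine Finset.sum_congr rfl fun k _ => ?_
    rw [← Finset.sum_neg_distrib]
    refine Finset.sum_congr rfl fun l _ => ?_
    rw [hanti2 i j l k]; ring
  simp_rw [h2, Finset.sum_neg_distrib]
  ring

lemma cs2 (f g : Fin n → Fin n → ℝ) :
    |∑ i, ∑ j, f i j * g i j|
      ≤ Real.sqrt (∑ i, ∑ j, (f i j)^2) * Real.sqrt (∑ i, ∑ j, (g i j)^2) := by
  have e1 : (∑ i, ∑ j, f i j * g i j)
      = ∑ p : Fin n × Fin n, f p.1 p.2 * g p.1 p.2 := by rw [Fintype.sum_prod_type]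
  have e2 : (∑ i, ∑ j, (f i j)^2) = ∑ p : Fin n × Fin n, (f p.1 p.2)^2 := by
    rw [Fintype.sum_prod_type]
  have e3 : (∑ i, ∑ j, (g i j)^2) = ∑ p : Fin n × Fin n, (g p.1 p.2)^2 := by
    rw [Fintype.sum_prod_type]
  rw [e1, e2, e3]
  have h := Finset.sum_mul_sq_le_sq_mul_sq Finset.univ
    (fun p : Fin n × Fin n => f p.1 p.2) (fun p : Fin n × Fin n => g p.1 p.2)
  have h1 : (0:ℝ) ≤ ∑ p : Fin n × Fin n, (f p.1 p.2)^2 :=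
    Finset.sum_nonneg fun p _ => sq_nonneg _
  calc |∑ p : Fin n × Fin n, f p.1 p.2 * g p.1 p.2|
      = Real.sqrt ((∑ p : Fin n × Fin n, f p.1 p.2 * g p.1 p.2)^2) :=
        (Real.sqrt_sq_eq_abs _).symm
    _ ≤ Real.sqrt ((∑ p : Fin n × Fin n, (f p.1 p.2)^2) * ∑ p : Fin n × Fin n, (g p.1 p.2)^2) :=
        Real.sqrt_le_sqrt h
    _ = _ := Real.sqrt_mul h1 _

lemma cs4 (f g : Fin n → Fin n → Fin n → Fin n → ℝ) :
    |∑ i, ∑ j, ∑ k, ∑ l, f i j k l * g i j k l|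
      ≤ Real.sqrt (∑ i, ∑ j, ∑ k, ∑ l, (f i j k l)^2)
        * Real.sqrt (∑ i, ∑ j, ∑ k, ∑ l, (g i j k l)^2) := by
  have e1 : (∑ i, ∑ j, ∑ k, ∑ l, f i j k l * g i j k l)
      = ∑ p : Fin n × Fin n × Fin n × Fin n,
          f p.1 p.2.1 p.2.2.1 p.2.2.2 * g p.1 p.2.1 p.2.2.1 p.2.2.2 := by
    simp [Fintype.sum_prod_type]
  have e2 : (∑ i, ∑ j, ∑ k, ∑ l, (f i j k l)^2)
      = ∑ p : Fin n × Fin n × Fin n × Fin n, (f p.1 p.2.1 p.2.2.1 p.2.2.2)^2 := by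
    simp [Fintype.sum_prod_type]
  have e3 : (∑ i, ∑ j, ∑ k, ∑ l, (g i j k l)^2)
      = ∑ p : Fin n × Fin n × Fin n × Fin n, (g p.1 p.2.1 p.2.2.1 p.2.2.2)^2 := by
    simp [Fintype.sum_prod_type]
  rw [e1, e2, e3]
  have h := Finset.sum_mul_sq_le_sq_mul_sq Finset.univ
    (fun p : Fin n × Fin n × Fin n × Fin n => f p.1 p.2.1 p.2.2.1 p.2.2.2)
    (fun p : Fin n × Fin n × Fin n × Fin n => g p.1 p.2.1 p.2.2.1 p.2.2.2)
  have h1 : (0:ℝ) ≤ ∑ p : Fin n × Fin n × Fin n × Fin n, (f p.1 p.2.1 p.2.2.1 p.2.2.2)^2 :=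
    Finset.sum_nonneg fun p _ => sq_nonneg _
  calc |∑ p : Fin n × Fin n × Fin n × Fin n,
          f p.1 p.2.1 p.2.2.1 p.2.2.2 * g p.1 p.2.1 p.2.2.1 p.2.2.2|
      = Real.sqrt ((∑ p : Fin n × Fin n × Fin n × Fin n,
          f p.1 p.2.1 p.2.2.1 p.2.2.2 * g p.1 p.2.1 p.2.2.1 p.2.2.2)^2) :=
        (Real.sqrt_sq_eq_abs _).symm
    _ ≤ _ := (Real.sqrt_le_sqrt h).trans_eq (Real.sqrt_mul h1 _)

lemma twoCS (A C R b β : ℝ) (hA : 0 ≤ A) (hC : 0 ≤ C) (hR : 0 ≤ R) (hb : 0 ≤ b)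
    (hβ : 0 ≤ β) :
    (1/2)*(Real.sqrt A * Real.sqrt C) + (β/2)*(Real.sqrt R * Real.sqrt b)
      ≤ Real.sqrt (A + β*b) * Real.sqrt (C/4 + (β/4)*R) := by
  set s1 := Real.sqrt A with hs1
  set s2 := Real.sqrt C with hs2
  set s3 := Real.sqrt R with hs3
  set s4 := Real.sqrt b with hs4
  set u := Real.sqrt (A + β*b) with hu
  set v := Real.sqrt (C/4 + (β/4)*R) with hv
  have q1 : s1^2 = A := Real.sq_sqrt hA
  have q2 : s2^2 = C := Real.sq_sqrt hC
  have q3 : s3^2 = R := Real.sq_sqrt hR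
  have q4 : s4^2 = b := Real.sq_sqrt hb
  have qu : u^2 = A + β*b := Real.sq_sqrt (by positivity)
  have qv : v^2 = C/4 + (β/4)*R := Real.sq_sqrt (by positivity)
  have n1 : 0 ≤ s1 := Real.sqrt_nonneg _
  have n2 : 0 ≤ s2 := Real.sqrt_nonneg _
  have n3 : 0 ≤ s3 := Real.sqrt_nonneg _
  have n4 : 0 ≤ s4 := Real.sqrt_nonneg _
  have nu : 0 ≤ u := Real.sqrt_nonneg _
  have nv : 0 ≤ v := Real.sqrt_nonneg _
  have hL : 0 ≤ (1/2)*(s1*s2) + (β/2)*(s3*s4) := by positivity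
  have hUV : 0 ≤ u * v := mul_nonneg nu nv
  have hsq : ((1/2)*(s1*s2) + (β/2)*(s3*s4))^2 ≤ (u*v)^2 := by
    have key : 0 ≤ β * (s1*s3 - s2*s4)^2 := mul_nonneg hβ (sq_nonneg _)
    have expand : (u*v)^2 = (s1^2 + β*s4^2) * (s2^2/4 + (β/4)*s3^2) := by
      rw [mul_pow, qu, qv, q1, q2, q3, q4]
    nlinarith [key]
  calc (1/2)*(s1*s2) + (β/2)*(s3*s4)
      = Real.sqrt (((1/2)*(s1*s2) + (β/2)*(s3*s4))^2) := (Real.sqrt_sq hL).symm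
    _ ≤ Real.sqrt ((u*v)^2) := Real.sqrt_le_sqrt hsq
    _ = u * v := Real.sqrt_sq hUV

lemma sumWDD (W : Fin n → Fin n → Fin n → Fin n → ℝ) (B : Fin n → Fin n → ℝ)
    (hWsym : ∀ i j k l, W i j k l = W j i l k)
    (hWa1 : ∀ i j k l, W i j k l = -W j i k l)
    (hWa2 : ∀ i j k l, W i j k l = -W i j l k)
    (hric : ∀ j l, (∑ i, W i j i l) = 0) :
    (∑ i, ∑ j, ∑ k, ∑ l, W i j k l * DD B i j k l)
      = ∑ i, ∑ j, ∑ k, ∑ l, W i j k l * (B i k * B j l - B i l * B j k) := by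
  have hpt : ∀ i j k l, W i j k l * DD B i j k l
      = W i j k l * (B i k * B j l - B i l * B j k)
        + (1/((n:ℝ)-2)) * (W i j k l * (dl i k * rr B j l) + W i j k l * (dl j l * rr B i k)
            - W i j k l * (dl i l * rr B j k) - W i j k l * (dl j k * rr B i l))
        + (b2 B/((n:ℝ)*((n:ℝ)-1))) * (W i j k l * (dl i k * dl j l) - W i j k l * (dl i l * dl j k)) :=
    fun i j k l => exp_mul _ _ _ _ _ _ _ _ _ _ _ (DD_def B i j k l)
  simp only [hpt, Finset.sum_add_distrib, Finset.sum_sub_distrib, ← Finset.mul_sum]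
  rw [czA W (rr B) hric, czB W (rr B) hWsym hric,
    czC W (rr B) hWa2 hric, czD W (rr B) hWa1 hric,
    czA W dl hric, czC W dl hWa2 hric]
  ring
end Stmt5Aux

open Stmt5Aux in
/-- Lemma 2.5 of the paper:
`|−W_{ijkl} B_{ik} B_{jl} + (n/(n−2)) tr(B³)|
  ≤ √((n−2)/(2(n−1))) (‖W‖² + (2n/(n−2))‖B‖²)^{1/2} ‖B‖²`. -/
theorem stmt_5 (n : ℕ) (hn : 3 ≤ n)
    (W : Fin n → Fin n → Fin n → Fin n → ℝ)
    (hanti1 : ∀ i j k l, W i j k l = -W j i k l)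
    (hanti2 : ∀ i j k l, W i j k l = -W i j l k)
    (hpair : ∀ i j k l, W i j k l = W k l i j)
    (hbianchi : ∀ i j k l, W i j k l + W i k l j + W i l j k = 0)
    (htrfree : ∀ j l, ∑ i, W i j i l = 0)
    (B : Matrix (Fin n) (Fin n) ℝ) (hB : B.IsSymm) (htrB : B.trace = 0) :
    |-(∑ i, ∑ j, ∑ k, ∑ l, W i j k l * B i k * B j l) +
        (n : ℝ) / ((n : ℝ) - 2) * (B ^ 3).trace| ≤
      Real.sqrt (((n : ℝ) - 2) / (2 * ((n : ℝ) - 1))) *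
        Real.sqrt ((∑ i, ∑ j, ∑ k, ∑ l, (W i j k l) ^ 2) +
          2 * (n : ℝ) / ((n : ℝ) - 2) * ∑ i, ∑ j, (B i j) ^ 2) *
        (∑ i, ∑ j, (B i j) ^ 2) := by
  have hBs : ∀ i j, B j i = B i j := fun i j => hB.apply i j
  have htr : (∑ i, B i i) = 0 := by simpa [Matrix.trace, Matrix.diag] using htrB
  have hn3 : ((n:ℝ)) ≥ 3 := by exact_mod_cast hn
  have hne2 : ((n:ℝ)-2) ≠ 0 := by nlinarith
  have hne0 : ((n:ℝ)) ≠ 0 := by nlinarith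
  have hne1 : ((n:ℝ)-1) ≠ 0 := by nlinarith
  have hWsym : ∀ i j k l, W i j k l = W j i l k := by
    intro i j k l; rw [hanti1 i j k l, hanti2 j i k l]; ring
  -- abbreviations
  set β : ℝ := 2 * (n:ℝ) / ((n:ℝ) - 2) with hβdef
  set c0 : ℝ := ((n:ℝ) - 2) / (2 * ((n:ℝ) - 1)) with hc0def
  set P : ℝ := ∑ i, ∑ j, ∑ k, ∑ l, W i j k l * B i k * B j l with hPdef
  set w2 : ℝ := ∑ i, ∑ j, ∑ k, ∑ l, (W i j k l) ^ 2 with hw2def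
  set bq : ℝ := ∑ i, ∑ j, (B i j) ^ 2 with hbqdef
  have hbqb2 : b2 B = bq := rfl
  set d2 : ℝ := ∑ i, ∑ j, ∑ k, ∑ l, (DD B i j k l)^2 with hd2def
  set R : ℝ := ∑ i, ∑ j, (rr B i j)^2 with hRdef
  set S1 : ℝ := ∑ i, ∑ j, ∑ k, ∑ l, W i j k l * DD B i j k l with hS1def
  set S2 : ℝ := ∑ i, ∑ j, rr B i j * B i j with hS2def
  -- identities
  have hS1P : S1 = 2 * P := by
    rw [hS1def, sumWDD W B hWsym hanti1 hanti2 htrfree, sumWV W B hanti2, hPdef]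
  have hnorm : d2 + β * R = (2*((n:ℝ)-2)/((n:ℝ)-1)) * bq^2 := by
    rw [hd2def, hRdef, hβdef, ← hbqb2]
    exact hNorm B hn hBs htr
  have ht3 : (B^3).trace = S2 := by
    have e1 : (B^3).trace = ∑ i, ∑ j, (∑ k, B i k * B k j) * B j i := by
      rw [pow_succ, pow_succ, pow_one]
      simp [Matrix.trace, Matrix.diag, Matrix.mul_apply, Finset.sum_mul]
    have e2 : ∀ i j : Fin n, (∑ k, B i k * B k j) * B j i
        = rr B i j * B i j + (b2 B/(n:ℝ)) * (dl i j * B i j) := by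
      intro i j
      have hEE : (∑ k, B i k * B k j) = EE B i j := rfl
      have hrre : EE B i j = rr B i j + b2 B / (n:ℝ) * dl i j := by unfold Stmt5Aux.rr; ring
      rw [hEE, hrre, hBs i j]; ring
    rw [e1]
    simp_rw [e2, Finset.sum_add_distrib, ← Finset.mul_sum, sum_dl_mul']
    rw [htr, hS2def]
    ring
  -- nonnegativity
  have hw2n : (0:ℝ) ≤ w2 := by
    rw [hw2def]
    exact Finset.sum_nonneg fun i _ => Finset.sum_nonneg fun j _ =>
      Finset.sum_nonneg fun k _ => Finset.sum_nonneg fun l _ => sq_nonneg _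
  have hd2n : (0:ℝ) ≤ d2 := by
    rw [hd2def]
    exact Finset.sum_nonneg fun i _ => Finset.sum_nonneg fun j _ =>
      Finset.sum_nonneg fun k _ => Finset.sum_nonneg fun l _ => sq_nonneg _
  have hRn : (0:ℝ) ≤ R := by
    rw [hRdef]
    exact Finset.sum_nonneg fun i _ => Finset.sum_nonneg fun j _ => sq_nonneg _
  have hbn : (0:ℝ) ≤ bq := by
    rw [hbqdef]
    exact Finset.sum_nonneg fun i _ => Finset.sum_nonneg fun j _ => sq_nonneg _
  have hβn : (0:ℝ) ≤ β := by
    rw [hβdef]; apply div_nonneg (by positivity); nlinarith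
  have hc0n : (0:ℝ) ≤ c0 := by
    rw [hc0def]; apply div_nonneg <;> nlinarith
  have hcn : (0:ℝ) ≤ (n:ℝ)/((n:ℝ)-2) := by
    apply div_nonneg (by positivity); nlinarith
  -- Cauchy–Schwarz bounds
  have hcs1 : |S1| ≤ Real.sqrt w2 * Real.sqrt d2 := by
    rw [hS1def, hw2def, hd2def]; exact cs4 W (DD B)
  have hcs2 : |S2| ≤ Real.sqrt R * Real.sqrt bq := by
    rw [hS2def, hRdef, hbqdef]; exact cs2 (rr B) (fun i j => B i j)
  -- main chain
  have he : -(P) + (n:ℝ)/((n:ℝ)-2) * (B^3).trace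
      = -(1/2)*S1 + ((n:ℝ)/((n:ℝ)-2))*S2 := by
    rw [ht3, hS1P]; ring
  have hnorm' : (d2 + β * R) * ((n:ℝ)-1) = 2*((n:ℝ)-2) * bq^2 := by
    field_simp at hnorm
    linarith [hnorm]
  have he2 : d2/4 + (β/4)*R = c0 * bq^2 := by
    rw [hc0def]
    field_simp
    linear_combination (2:ℝ) * hnorm'
  calc |-(P) + (n:ℝ)/((n:ℝ)-2) * (B^3).trace|
      = |(-(1/2))*S1 + ((n:ℝ)/((n:ℝ)-2))*S2| := by rw [he]
    _ ≤ |(-(1/2))*S1| + |((n:ℝ)/((n:ℝ)-2))*S2| := abs_add_le _ _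
    _ = (1/2)*|S1| + ((n:ℝ)/((n:ℝ)-2))*|S2| := by
        rw [abs_mul, abs_mul, abs_of_nonneg hcn]
        norm_num
    _ ≤ (1/2)*(Real.sqrt w2 * Real.sqrt d2) + ((n:ℝ)/((n:ℝ)-2))*(Real.sqrt R * Real.sqrt bq) := by
        have g1 := mul_le_mul_of_nonneg_left hcs1 (by norm_num : (0:ℝ) ≤ 1/2)
        have g2 := mul_le_mul_of_nonneg_left hcs2 hcn
        linarith
    _ = (1/2)*(Real.sqrt w2 * Real.sqrt d2) + (β/2)*(Real.sqrt R * Real.sqrt bq) := by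
        rw [hβdef]; ring_nf
    _ ≤ Real.sqrt (w2 + β*bq) * Real.sqrt (d2/4 + (β/4)*R) :=
        twoCS w2 d2 R bq β hw2n hd2n hRn hbn hβn
    _ = Real.sqrt (w2 + β*bq) * Real.sqrt (c0 * bq^2) := by rw [he2]
    _ = Real.sqrt c0 * Real.sqrt (w2 + β*bq) * bq := by
        rw [Real.sqrt_mul hc0n, Real.sqrt_sq hbn]; ring
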